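/- Let (G,H,K) be a BX2P-folder. Then every subgroup U of G with H ≤ U has index |G : U| equal to 1 or even. -/

import Mathlib

section Aux

/-- Parity of fixed points of an involution on a finite type. -/
lemma card_modEq_card_fixed_of_involutive {α : Type*} [Finite α] (f : α → α)
    (hf : Function.Involutive f) :
    Nat.card α ≡ Nat.card {x : α // f x = x} [MOD 2] := by
  classical
  let σ : Equiv.Perm α := hf.toPerm
  have hσx : ∀ x, σ x = f x := fun x => rfl
  have hσ2 : σ ^ 2 = 1 := by
    ext x
    simp only [Equiv.Perm.coe_one, id_eq, sq, Equiv.Perm.coe_mul, Function.comp_apply, hσx]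
    exact hf x
  have hP : IsPGroup 2 (Subgroup.zpowers σ) := by
    rintro ⟨g, hg⟩
    refine ⟨1, ?_⟩
    obtain ⟨n, rfl⟩ := hg
    have : (σ ^ n) ^ (2 : ℕ) ^ 1 = 1 := by
      rw [pow_one, ← zpow_natCast, ← zpow_mul, mul_comm, zpow_mul, zpow_natCast, hσ2,
        one_zpow]
    exact Subtype.ext (by simpa using this)
  have hmod := hP.card_modEq_card_fixedPoints α
  have hset : Nat.card (MulAction.fixedPoints (Subgroup.zpowers σ) α)
      = Nat.card {x : α // f x = x} := by
    apply Nat.card_congr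
    apply Equiv.subtypeEquivRight
    intro x
    constructor
    · intro hx
      have := hx ⟨σ, Subgroup.mem_zpowers σ⟩
      simpa [hσx] using this
    · rintro hx ⟨g, hg⟩
      obtain ⟨n, rfl⟩ := hg
      have : (σ ^ n) x = x :=
        Equiv.Perm.zpow_apply_eq_self_of_apply_eq_self (by rw [hσx]; exact hx) n
      exact this
  rw [hset] at hmod
  exact hmod

variable {G : Type*} [Group G]

/-- The twisted involution `xU ↦ (a * τ x) U` on the coset space. -/
def bx2pPsi (U : Subgroup G) (τ : G ≃* G) (hτU : ∀ u ∈ U, τ u ∈ U) (a : G) :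
    G ⧸ U → G ⧸ U :=
  Quotient.map' (fun x => a * τ x) (by
    intro x y hxy
    rw [QuotientGroup.leftRel_apply] at hxy ⊢
    have : τ (x⁻¹ * y) ∈ U := hτU _ hxy
    rw [map_mul, map_inv] at this
    simpa [mul_assoc] using this)

lemma bx2pPsi_mk (U : Subgroup G) (τ : G ≃* G) (hτU : ∀ u ∈ U, τ u ∈ U) (a x : G) :
    bx2pPsi U τ hτU a (QuotientGroup.mk x) = QuotientGroup.mk (a * τ x) := rfl

/-- Key lemma: odd index overgroup of `H` is everything. -/
lemma bx2p_top_of_odd {G : Type*} [Group G] [Finite G]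
    (H : Subgroup G) (K : Set G) (τ : G ≃* G)
    (h1 : (1 : G) ∈ K)
    (h2 : ∀ u g : G, ∃! k, k ∈ K ∧ ∃ h ∈ H, g = u⁻¹ * h * u * k)
    (h3 : ∀ x ∈ K, x⁻¹ ∈ K)
    (h4 : ∀ x ∈ K, ∀ y ∈ K, x * y * x ∈ K)
    (h5 : ∀ k ∈ K, ∃ n : ℕ, orderOf k = 2 ^ n)
    (h7 : ∀ g : G, τ (τ g) = g)
    (h8 : ∀ h ∈ H, τ h = h)
    (h9 : ∀ k ∈ K, τ k = k⁻¹)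
    (h10 : ∀ g : G, ∀ k ∈ K, (τ g)⁻¹ * k * g ∈ K)
    (U : Subgroup G) (hU : H ≤ U) (hodd : Odd U.index) : U = ⊤ := by
  classical
  have : Fintype G := Fintype.ofFinite G
  -- decomposition g = h * k
  have hdecomp : ∀ g : G, ∃ k ∈ K, ∃ h ∈ H, g = h * k := by
    intro g
    obtain ⟨k, ⟨hk, h, hh, hg⟩, -⟩ := h2 1 g
    exact ⟨k, hk, h, hh, by simpa using hg⟩
  -- uniqueness of the K-part
  have huniq : ∀ g : G, ∀ k ∈ K, ∀ k' ∈ K,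
      (∃ h ∈ H, g = h * k) → (∃ h ∈ H, g = h * k') → k = k' := by
    intro g k hk k' hk' ⟨h, hh, hg⟩ ⟨h', hh', hg'⟩
    obtain ⟨k₀, -, hu⟩ := h2 1 g
    have e1 : k = k₀ := hu k ⟨hk, h, hh, by simpa using hg⟩
    have e2 : k' = k₀ := hu k' ⟨hk', h', hh', by simpa using hg'⟩
    rw [e1, e2]
  -- τ preserves U
  have hτU : ∀ u ∈ U, τ u ∈ U := by
    intro u hu
    obtain ⟨k, hk, h, hh, rfl⟩ := hdecomp u
    have hkU : k ∈ U := by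
      have : h⁻¹ * (h * k) ∈ U := U.mul_mem (U.inv_mem (hU hh)) hu
      simpa [mul_assoc] using this
    rw [map_mul, h8 h hh, h9 k hk]
    exact U.mul_mem (hU hh) (U.inv_mem hkU)
  -- twisted conjugation stability
  have lamK : ∀ x : G, ∀ k ∈ K, x⁻¹ * k * τ x ∈ K := by
    intro x k hk
    have := h10 (τ x) k hk
    rwa [h7 x] at this
  have lamK' : ∀ x : G, ∀ k ∈ K, x * k * (τ x)⁻¹ ∈ K := by
    intro x k hk
    have := h10 ((τ x)⁻¹) k hk
    rwa [map_inv, h7 x, inv_inv] at this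
  set Ψ := bx2pPsi U τ hτU with hΨdef
  -- Ψ k is involutive for k ∈ K
  have hinv : ∀ k ∈ K, Function.Involutive (Ψ k) := by
    intro k hk ω
    induction ω using QuotientGroup.induction_on with
    | H x =>
      rw [hΨdef, bx2pPsi_mk, bx2pPsi_mk]
      rw [map_mul, h9 k hk, h7 x]
      group
  -- Finsets
  set KF : Finset G := K.toFinset with hKF
  have hmemKF : ∀ x : G, x ∈ KF ↔ x ∈ K := by simp [hKF]
  set m : ℕ := (KF.filter (fun k => k ∈ U)).card with hm
  -- fixed point criterion
  have hfixiff : ∀ k x : G, Ψ k (QuotientGroup.mk x) = QuotientGroup.mk x ↔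
      x⁻¹ * k * τ x ∈ U := by
    intro k x
    rw [hΨdef, bx2pPsi_mk, QuotientGroup.eq]
    constructor
    · intro h
      have := U.inv_mem h
      simpa [mul_assoc] using this
    · intro h
      have := U.inv_mem h
      simpa [mul_assoc] using this
  -- per-coset count
  have hperω : ∀ ω : G ⧸ U, (KF.filter (fun k => Ψ k ω = ω)).card = m := by
    intro ω
    induction ω using QuotientGroup.induction_on with
    | H x =>
      rw [hm]
      apply Finset.card_bij (fun k _ => x⁻¹ * k * τ x)
      · intro k hkmem
        rw [Finset.mem_filter] at hkmem ⊢
        obtain ⟨hk1, hk2⟩ := hkmem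
        rw [hmemKF] at hk1
        refine ⟨(hmemKF _).2 (lamK x k hk1), ?_⟩
        rw [hfixiff] at hk2
        exact hk2
      · intro a ha b hb hab
        have := mul_left_cancel (mul_right_cancel hab)
        exact this
      · intro k' hk'
        rw [Finset.mem_filter, hmemKF] at hk'
        obtain ⟨hk'K, hk'U⟩ := hk'
        refine ⟨x * k' * (τ x)⁻¹, ?_, by group⟩
        rw [Finset.mem_filter, hmemKF]
        refine ⟨lamK' x k' hk'K, ?_⟩
        rw [hfixiff]
        have : x⁻¹ * (x * k' * (τ x)⁻¹) * τ x = k' := by group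
        rw [this]
        exact hk'U
  -- double counting
  have hsum : ∑ k ∈ KF, (Finset.univ.filter (fun ω : G ⧸ U => Ψ k ω = ω)).card
      = (Fintype.card (G ⧸ U)) * m := by
    have : ∀ k ∈ KF, (Finset.univ.filter (fun ω : G ⧸ U => Ψ k ω = ω)).card
        = ∑ ω : G ⧸ U, if Ψ k ω = ω then 1 else 0 := by
      intro k _
      rw [Finset.card_filter]
    rw [Finset.sum_congr rfl this, Finset.sum_comm]
    have : ∀ ω : G ⧸ U, ∑ k ∈ KF, (if Ψ k ω = ω then 1 else 0) = m := by
      intro ω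
      rw [← Finset.card_filter]
      exact hperω ω
    rw [Finset.sum_congr rfl (fun ω _ => this ω), Finset.sum_const, Finset.card_univ,
      smul_eq_mul]
  -- |K| = H.index
  have hKcard : KF.card = H.index := by
    rw [Subgroup.index_eq_card]
    have : KF.card = Nat.card K := by
      rw [hKF, Set.toFinset_card, Nat.card_eq_fintype_card]
    rw [this]
    apply Nat.card_eq_of_bijective (fun k : K => (QuotientGroup.mk k.1 : G ⧸ H))
    constructor
    · rintro ⟨k, hk⟩ ⟨k', hk'⟩ hkk'
      rw [QuotientGroup.eq] at hkk'
      have hd1 : ∃ h ∈ H, k'⁻¹ = h * k⁻¹ := by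
        refine ⟨k'⁻¹ * k, ?_, by group⟩
        have := H.inv_mem hkk'
        simpa using this
      have hd2 : ∃ h ∈ H, k'⁻¹ = h * k'⁻¹ := ⟨1, H.one_mem, by group⟩
      have := huniq k'⁻¹ k⁻¹ (h3 k hk) k'⁻¹ (h3 k' hk') hd1 hd2
      ext
      exact inv_injective this
    · intro ω
      induction ω using QuotientGroup.induction_on with
      | H g =>
        obtain ⟨k₀, hk₀, h, hh, hg⟩ := hdecomp g⁻¹
        refine ⟨⟨k₀⁻¹, h3 k₀ hk₀⟩, ?_⟩
        rw [QuotientGroup.eq]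
        have : g = k₀⁻¹ * h⁻¹ := by
          rw [← inv_inv g, hg]; group
        rw [this]
        simpa using H.inv_mem hh
  -- m = relindex
  have hmcard : m = H.relIndex U := by
    have hmem2 : ∀ x : G, x ∈ KF.filter (fun k => k ∈ U) ↔ x ∈ K ∧ x ∈ U := by
      intro x; rw [Finset.mem_filter, hmemKF]
    have : m = Nat.card {x : G // x ∈ K ∧ x ∈ U} := by
      rw [hm, Nat.card_eq_fintype_card]
      rw [← Fintype.card_coe]
      apply Fintype.card_congr
      exact Equiv.subtypeEquivRight (by intro x; rw [hmem2])
    rw [this, Subgroup.relIndex, Subgroup.index_eq_card]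
    apply Nat.card_eq_of_bijective
      (fun k : {x : G // x ∈ K ∧ x ∈ U} =>
        (QuotientGroup.mk ⟨k.1, k.2.2⟩ : U ⧸ H.subgroupOf U))
    constructor
    · rintro ⟨k, hkK, hkU⟩ ⟨k', hk'K, hk'U⟩ hkk'
      rw [QuotientGroup.eq] at hkk'
      rw [Subgroup.mem_subgroupOf] at hkk'
      simp only [Subgroup.coe_mul, Subgroup.coe_inv] at hkk'
      have hd1 : ∃ h ∈ H, k'⁻¹ = h * k⁻¹ := by
        refine ⟨k'⁻¹ * k, ?_, by group⟩
        have := H.inv_mem hkk'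
        simpa using this
      have hd2 : ∃ h ∈ H, k'⁻¹ = h * k'⁻¹ := ⟨1, H.one_mem, by group⟩
      have := huniq k'⁻¹ k⁻¹ (h3 k hkK) k'⁻¹ (h3 k' hk'K) hd1 hd2
      ext
      exact inv_injective this
    · intro ω
      induction ω using QuotientGroup.induction_on with
      | H u =>
        obtain ⟨k₀, hk₀, h, hh, hg⟩ := hdecomp (u : G)⁻¹
        have hkU : (k₀ : G)⁻¹ ∈ U := by
          have : (u : G) = k₀⁻¹ * h⁻¹ := by rw [← inv_inv (u : G), hg]; group
          have h2' : k₀⁻¹ = (u : G) * h := by rw [this]; group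
          rw [h2']
          exact U.mul_mem u.2 (hU hh)
        refine ⟨⟨k₀⁻¹, h3 k₀ hk₀, hkU⟩, ?_⟩
        rw [QuotientGroup.eq, Subgroup.mem_subgroupOf]
        simp only [Subgroup.coe_mul, Subgroup.coe_inv]
        have : (k₀⁻¹ : G)⁻¹ * (u : G) = h⁻¹ := by
          rw [inv_inv, ← inv_inv (u : G), hg]; group
        rw [this]
        exact H.inv_mem hh
  -- total count equals |K|
  have hΩcard : Fintype.card (G ⧸ U) = U.index := by
    rw [Subgroup.index_eq_card, Nat.card_eq_fintype_card]
  have htotal : ∑ k ∈ KF, (Finset.univ.filter (fun ω : G ⧸ U => Ψ k ω = ω)).card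
      = KF.card := by
    rw [hsum, hΩcard, hmcard, hKcard, mul_comm]
    exact Subgroup.relIndex_mul_index hU
  -- each fixed point count is at least 1 (parity argument)
  have hge1 : ∀ k ∈ KF, 1 ≤ (Finset.univ.filter (fun ω : G ⧸ U => Ψ k ω = ω)).card := by
    intro k hk
    rw [hmemKF] at hk
    have hmod := card_modEq_card_fixed_of_involutive (Ψ k) (hinv k hk)
    have hcards : (Finset.univ.filter (fun ω : G ⧸ U => Ψ k ω = ω)).card
        = Nat.card {ω : G ⧸ U // Ψ k ω = ω} := by
      rw [Nat.card_eq_fintype_card, Fintype.card_subtype]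
    rw [hcards]
    have hΩodd : Odd (Nat.card (G ⧸ U)) := by
      rwa [← Subgroup.index_eq_card]
    have : Odd (Nat.card {ω : G ⧸ U // Ψ k ω = ω}) := by
      rcases hΩodd with ⟨t, ht⟩
      rw [Nat.ModEq] at hmod
      rw [Nat.odd_iff] at *
      rw [← hmod]
      omega
    rcases this with ⟨t, ht⟩
    omega
  -- force each count to be exactly 1
  have hone : ∀ k ∈ KF, (Finset.univ.filter (fun ω : G ⧸ U => Ψ k ω = ω)).card = 1 := by
    by_contra hcon
    push_neg at hcon
    obtain ⟨k₀, hk₀, hne⟩ := hcon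
    have hgt : 1 < (Finset.univ.filter (fun ω : G ⧸ U => Ψ k₀ ω = ω)).card :=
      lt_of_le_of_ne (hge1 k₀ hk₀) (Ne.symm hne)
    have : KF.card < ∑ k ∈ KF, (Finset.univ.filter (fun ω : G ⧸ U => Ψ k ω = ω)).card := by
      calc KF.card = ∑ _k ∈ KF, 1 := by rw [Finset.sum_const, smul_eq_mul, mul_one]
      _ < _ := Finset.sum_lt_sum (fun i hi => hge1 i hi) ⟨k₀, hk₀, hgt⟩
    omega
  -- key step : k² ∈ U → k ∈ U
  have hkey : ∀ k ∈ K, k ^ 2 ∈ U → k ∈ U := by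
    intro k hk hk2
    have h1K : (1 : G) ∈ KF := (hmemKF 1).2 h1
    have hcard1 := hone 1 h1K
    have hmem1 : (QuotientGroup.mk 1 : G ⧸ U) ∈
        Finset.univ.filter (fun ω : G ⧸ U => Ψ 1 ω = ω) := by
      rw [Finset.mem_filter]
      refine ⟨Finset.mem_univ _, ?_⟩
      rw [hfixiff]
      simpa using U.one_mem
    have hmemk : (QuotientGroup.mk k⁻¹ : G ⧸ U) ∈
        Finset.univ.filter (fun ω : G ⧸ U => Ψ 1 ω = ω) := by
      rw [Finset.mem_filter]
      refine ⟨Finset.mem_univ _, ?_⟩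
      rw [hfixiff]
      rw [map_inv, h9 k hk]
      have : (k⁻¹)⁻¹ * 1 * k⁻¹⁻¹ = k ^ 2 := by rw [inv_inv, mul_one, ← pow_two]
      rw [this]
      exact hk2
    have := Finset.card_le_one.mp (le_of_eq hcard1) _ hmemk _ hmem1
    rw [QuotientGroup.eq] at this
    simpa using U.inv_mem this
  -- induction: all of K is in U
  have hKU : ∀ n : ℕ, ∀ k ∈ K, k ^ (2 ^ n) = 1 → k ∈ U := by
    intro n
    induction n with
    | zero =>
      intro k _ hk1
      simp only [pow_zero, pow_one] at hk1
      rw [hk1]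
      exact U.one_mem
    | succ n ih =>
      intro k hk hk1
      have hk2K : k ^ 2 ∈ K := by
        have := h4 k hk 1 h1
        simpa [sq, mul_assoc] using this
      have hk2pow : (k ^ 2) ^ (2 ^ n) = 1 := by
        rw [← pow_mul]
        rw [← hk1]
        ring_nf
      exact hkey k hk (ih (k ^ 2) hk2K hk2pow)
  have hKsubU : K ⊆ ↑U := by
    intro k hk
    obtain ⟨n, hn⟩ := h5 k hk
    exact hKU n k hk (by rw [← hn]; exact pow_orderOf_eq_one k)
  -- conclude
  rw [eq_top_iff]
  intro g _
  obtain ⟨k, hk, h, hh, rfl⟩ := hdecomp g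
  exact U.mul_mem (hU hh) (hKsubU hk)

end Aux


/-- `(G,H,K)` is a BX2P-folder: a loop folder (`K` a transversal to all
conjugates of `H` in `G`, `1 ∈ K`) associated to a Bruck loop of 2-power
exponent: `K` is a twisted subgroup, every element of `K` has 2-power order,
`H` acts on `K` by conjugation, and there is an involutory automorphism `τ`
of `G` centralizing `H` and inverting every element of `K`, such that
`Λ = τK` is invariant under `G`-conjugation in `G⟨τ⟩` (equivalently,
`(τ g)⁻¹ * k * g ∈ K` for all `g ∈ G`, `k ∈ K`). -/
def IsBX2PFolder {G : Type*} [Group G] (H : Subgroup G) (K : Set G)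
    (τ : G ≃* G) : Prop :=
  ((1 : G) ∈ K) ∧
  (∀ u g : G, ∃! k, k ∈ K ∧ ∃ h ∈ H, g = u⁻¹ * h * u * k) ∧
  (∀ x ∈ K, x⁻¹ ∈ K) ∧
  (∀ x ∈ K, ∀ y ∈ K, x * y * x ∈ K) ∧
  (∀ k ∈ K, ∃ n : ℕ, orderOf k = 2 ^ n) ∧
  (∀ h ∈ H, ∀ k ∈ K, h * k * h⁻¹ ∈ K) ∧
  (∀ g : G, τ (τ g) = g) ∧
  (∀ h ∈ H, τ h = h) ∧
  (∀ k ∈ K, τ k = k⁻¹) ∧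
  (∀ g : G, ∀ k ∈ K, (τ g)⁻¹ * k * g ∈ K)

/-- If `(G,H,K)` is a BX2P-folder, then every subgroup `U` of `G`
with `H ≤ U` has index `|G : U|` equal to `1` or even. -/
theorem index_one_or_even_of_overgroup {G : Type*} [Group G] [Finite G]
    (H : Subgroup G) (K : Set G) (τ : G ≃* G)
    (hfolder : IsBX2PFolder H K τ)
    (U : Subgroup G) (hU : H ≤ U) :
    U.index = 1 ∨ Even U.index := by
  obtain ⟨h1, h2, h3, h4, h5, h6, h7, h8, h9, h10⟩ := hfolder
  rcases Nat.even_or_odd U.index with he | ho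
  · exact Or.inr he
  · left
    have := bx2p_top_of_odd H K τ h1 h2 h3 h4 h5 h7 h8 h9 h10 U hU ho
    rw [this, Subgroup.index_top]
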